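/- Let k be an algebraically closed field and let A be a k-algebra whose dimension as a k-vector space is strictly less than the cardinality of k. Then A is GCR if and only if for every simple left A-module V there exists a ∈ A whose action on V is a nonzero k-linear operator of finite rank; that is, a•V ≠ 0 and the k-subspace a•V of V is finite-dimensional over k. -/

import Mathlib

/-- A ring is (left) primitive if it admits a faithful simple left module. -/
def IsPrimitiveRing (R : Type u) [Ring R] : Prop :=
  ∃ (M : Type u) (_ : AddCommGroup M) (_ : Module R M), IsSimpleModule R M ∧ FaithfulSMul R M

/-- A ring has a minimal left ideal if there is an atom in its lattice of left ideals. -/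
def HasMinimalLeftIdeal (R : Type u) [Ring R] : Prop :=
  ∃ L : Submodule R R, IsAtom L

/-- A ring is GCR if every primitive quotient has a minimal left ideal. -/
def IsGCRRing (R : Type u) [Ring R] : Prop :=
  ∀ P : TwoSidedIdeal R, IsPrimitiveRing P.ringCon.Quotient →
    HasMinimalLeftIdeal P.ringCon.Quotient

universe u v

open Polynomial

theorem aux_smulCommClass {k A V : Type*} [CommSemiring k] [Ring A] [Algebra k A]
    [AddCommGroup V] [Module k V] [Module A V] [IsScalarTower k A V] :
    SMulCommClass A k V :=
  ⟨fun a c v => by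
    rw [← IsScalarTower.algebraMap_smul A c v, ← mul_smul, ← Algebra.commutes, mul_smul,
      IsScalarTower.algebraMap_smul]⟩

theorem exists_smul_eq_of_simple {R M : Type*} [Ring R] [AddCommGroup M] [Module R M]
    [IsSimpleModule R M] {u : M} (hu : u ≠ 0) (v : M) : ∃ x : R, x • u = v := by
  have hsp : Submodule.span R {u} = ⊤ := by
    rcases eq_bot_or_eq_top (Submodule.span R {u}) with h | h
    · exact absurd (Submodule.span_singleton_eq_bot.1 h) hu
    · exact h
  have : v ∈ Submodule.span R {u} := hsp ▸ Submodule.mem_top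
  obtain ⟨x, hx⟩ := Submodule.mem_span_singleton.1 this
  exact ⟨x, hx⟩

/-- Amitsur's trick: endomorphisms of simple modules are scalars. -/
theorem endo_scalar {k : Type u} {A : Type v} [Field k] [IsAlgClosed k] [Ring A] [Algebra k A]
    (hdim : Cardinal.lift.{u} (Module.rank k A) < Cardinal.lift.{v} (Cardinal.mk k))
    (V : Type v) [AddCommGroup V] [Module k V] [Module A V] [IsScalarTower k A V]
    [IsSimpleModule A V] (φ : V →ₗ[A] V) : ∃ c : k, ∀ v : V, φ v = c • v := by
  haveI : SMulCommClass A k V := aux_smulCommClass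
  classical
  by_contra hcon
  push_neg at hcon
  -- every `φ - c` is invertible
  have hne : ∀ c : k, φ - algebraMap k (Module.End A V) c ≠ 0 := by
    intro c h
    obtain ⟨v, hv⟩ := hcon c
    apply hv
    have := congrArg (fun ψ : Module.End A V => ψ v) h
    simpa [sub_eq_zero] using this
  have hunit : ∀ c : k, IsUnit (φ - algebraMap k (Module.End A V) c) := fun c =>
    (Module.End.isUnit_iff _).2 (LinearMap.bijective_of_ne_zero (hne c))
  set ψ : k → Module.End A V := fun c => ↑(hunit c).unit⁻¹ with hψ
  have hψ_mul : ∀ c : k, (φ - algebraMap k (Module.End A V) c) * ψ c = 1 := fun c => by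
    simpa [hψ] using (hunit c).unit.mul_inv
  -- a nonzero vector
  haveI : Nontrivial V := IsSimpleModule.nontrivial A V
  obtain ⟨v₀, hv₀⟩ := exists_ne (0 : V)
  -- injectivity of nonzero polynomials evaluated at φ
  have hinj : ∀ (n : ℕ) (p : k[X]), p.natDegree = n → p ≠ 0 →
      Function.Injective (aeval φ p : Module.End A V) := by
    intro n
    induction n using Nat.strong_induction_on with
    | _ n ih =>
      intro p hd hp
      rcases Nat.eq_zero_or_pos n with hn | hn
      · subst hn
        obtain ⟨a, rfl⟩ := Polynomial.natDegree_eq_zero.1 hd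
        have ha : a ≠ 0 := fun h => hp (by simp [h])
        intro x y hxy
        simp only [aeval_C, Module.algebraMap_end_apply] at hxy
        exact smul_right_injective V ha hxy
      · have hdeg : p.degree ≠ 0 := by
          rw [Polynomial.degree_eq_natDegree hp, hd]
          exact_mod_cast Nat.pos_iff_ne_zero.1 hn
        obtain ⟨r, hr⟩ := IsAlgClosed.exists_root p hdeg
        obtain ⟨q, hq⟩ := Polynomial.dvd_iff_isRoot.2 hr
        have hqne : q ≠ 0 := fun h => hp (by simp [hq, h])
        have hqdeg : q.natDegree < n := by
          have : p.natDegree = 1 + q.natDegree := by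
            rw [hq, Polynomial.natDegree_mul (Polynomial.X_sub_C_ne_zero r) hqne,
              Polynomial.natDegree_X_sub_C]
          omega
        have hqinj : Function.Injective (aeval φ q : Module.End A V) :=
          ih q.natDegree hqdeg q rfl hqne
        have hbij : Function.Bijective (φ - algebraMap k (Module.End A V) r) :=
          LinearMap.bijective_of_ne_zero (hne r)
        rw [hq, map_mul]
        have : ⇑(aeval φ (X - C r) * aeval φ q : Module.End A V)
            = ⇑(φ - algebraMap k (Module.End A V) r) ∘ ⇑(aeval φ q : Module.End A V) := by
          ext w; simp [Module.End.mul_apply]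
        rw [this]
        exact hbij.injective.comp hqinj
  -- the family of inverses applied to `v₀` is linearly independent
  have hli : LinearIndependent k fun c : k => ψ c v₀ := by
    rw [linearIndependent_iff']
    intro s g hsum i hi
    set P : Module.End A V := aeval φ (∏ j ∈ s, (X - C j)) with hP
    have hPψ : ∀ j ∈ s, P * ψ j = aeval φ (∏ l ∈ s.erase j, (X - C l)) := by
      intro j hj
      have : (∏ l ∈ s, (X - C l)) = (∏ l ∈ s.erase j, (X - C l)) * (X - C j) :=
        (Finset.prod_erase_mul s _ hj).symm
      rw [hP, this, map_mul, mul_assoc]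
      have : aeval φ (X - C j) * ψ j = 1 := by
        simpa using hψ_mul j
      rw [this, mul_one]
    -- apply P to the sum
    have h0 : (aeval φ (∑ j ∈ s, C (g j) * ∏ l ∈ s.erase j, (X - C l)) : Module.End A V) v₀
        = 0 := by
      have h1 : P (∑ j ∈ s, g j • ψ j v₀) = 0 := by rw [hsum, map_zero]
      calc (aeval φ (∑ j ∈ s, C (g j) * ∏ l ∈ s.erase j, (X - C l)) : Module.End A V) v₀
          = ∑ j ∈ s, g j • ((P * ψ j) v₀) := by
            rw [map_sum, LinearMap.sum_apply]
            refine Finset.sum_congr rfl fun j hj => ?_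
            rw [map_mul, aeval_C, hPψ j hj]
            simp [Module.End.mul_apply]
        _ = P (∑ j ∈ s, g j • ψ j v₀) := by
            rw [map_sum P]
            exact Finset.sum_congr rfl fun j hj =>
              (LinearMap.map_smul_of_tower P (g j) (ψ j v₀)).symm
        _ = 0 := h1
    -- hence the polynomial is zero
    set p : k[X] := ∑ j ∈ s, C (g j) * ∏ l ∈ s.erase j, (X - C l) with hp
    have hp0 : p = 0 := by
      by_contra hpne
      exact hv₀ ((hinj p.natDegree p rfl hpne) (by simpa using h0))
    -- evaluate at i
    have := congrArg (fun q => Polynomial.eval i q) hp0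
    simp only [hp, Polynomial.eval_finset_sum, Polynomial.eval_mul, Polynomial.eval_C,
      Polynomial.eval_prod, Polynomial.eval_sub, Polynomial.eval_X, Polynomial.eval_zero] at this
    rw [Finset.sum_eq_single i] at this
    · have hprod : (∏ l ∈ s.erase i, (i - l)) ≠ 0 :=
        Finset.prod_ne_zero_iff.2 fun l hl => sub_ne_zero.2 (Finset.ne_of_mem_erase hl).symm
      exact (mul_eq_zero.1 this).resolve_right hprod
    · intro j hj hji
      have : i ∈ s.erase j := Finset.mem_erase_of_ne_of_mem (Ne.symm hji) hi
      rw [Finset.prod_eq_zero this (by simp), mul_zero]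
    · intro h; exact absurd hi h
  -- cardinality contradiction
  have hcard : Cardinal.lift.{v} (Cardinal.mk k) ≤ Cardinal.lift.{u} (Module.rank k V) :=
    hli.cardinal_lift_le_rank
  have hVA : Module.rank k V ≤ Module.rank k A := by
    choose x hx using fun v => exists_smul_eq_of_simple (R := A) hv₀ v
    let ℓ : A →ₗ[k] V :=
      { toFun := fun a => a • v₀
        map_add' := fun a b => add_smul a b v₀
        map_smul' := fun c a => by simp [smul_assoc] }
    have hsurj : Function.Surjective ℓ := fun v => ⟨x v, hx v⟩
    exact LinearMap.rank_le_of_surjective ℓ hsurj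
  have := hcard.trans (Cardinal.lift_le.2 hVA)
  exact absurd hdim (not_lt.2 this)

section BC

variable {k R M : Type*} [Field k] [Ring R] [AddCommGroup M]
  [Module R M] [Module k M] [SMulCommClass R k M] [IsSimpleModule R M] [FaithfulSMul R M]

theorem exists_smul_eq_of_simple' {u : M} (hu : u ≠ 0) (v : M) : ∃ x : R, x • u = v := by
  have hsp : Submodule.span R {u} = ⊤ := by
    rcases eq_bot_or_eq_top (Submodule.span R {u}) with h | h
    · exact absurd (Submodule.span_singleton_eq_bot.1 h) hu
    · exact h
  have : v ∈ Submodule.span R {u} := hsp ▸ Submodule.mem_top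
  obtain ⟨x, hx⟩ := Submodule.mem_span_singleton.1 this
  exact ⟨x, hx⟩

theorem exists_smul_ne_zero {r : R} (hr : r ≠ 0) : ∃ m : M, r • m ≠ 0 := by
  by_contra h
  push_neg at h
  exact hr (eq_of_smul_eq_smul (α := M) (fun m => by rw [h m, zero_smul]))

/-- Lemma C : an atom gives a finite-rank element. -/
theorem finite_rank_of_atom
    (hEnd : ∀ φ : M →ₗ[R] M, ∃ c : k, ∀ m, φ m = c • m)
    {L : Submodule R R} (hL : IsAtom L) :
    ∃ r : R, (∃ m : M, r • m ≠ 0) ∧ (Submodule.span k (Set.range fun m : M => r • m)).FG := by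
  obtain ⟨r₀, hr₀L, hr₀⟩ := Submodule.exists_mem_ne_zero_of_ne_bot hL.1
  obtain ⟨m₀, hm₀⟩ := exists_smul_ne_zero (M := M) hr₀
  haveI : IsSimpleModule R L := isSimpleModule_iff_isAtom.2 hL
  let φ : L →ₗ[R] M :=
    { toFun := fun x => (x : R) • m₀
      map_add' := fun x y => add_smul (x : R) (y : R) m₀
      map_smul' := fun r x => mul_smul r (x : R) m₀ }
  have hφne : φ ≠ 0 := by
    intro h
    exact hm₀ (by simpa [φ] using congrArg (fun ψ : L →ₗ[R] M => ψ ⟨r₀, hr₀L⟩) h)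
  have hbij := LinearMap.bijective_of_ne_zero hφne
  let e : L ≃ₗ[R] M := LinearEquiv.ofBijective φ hbij
  refine ⟨r₀, ⟨m₀, hm₀⟩, {r₀ • m₀}, ?_⟩
  apply le_antisymm
  · rw [Submodule.span_le]
    intro w hw
    simp only [Finset.coe_singleton, Set.mem_singleton_iff] at hw
    subst hw
    exact Submodule.subset_span ⟨m₀, rfl⟩
  · rw [Submodule.span_le]
    rintro _ ⟨v, rfl⟩
    have hrv : ∃ c : k, r₀ • v = c • (r₀ • m₀) := by
      let ψ : L →ₗ[R] M :=
        { toFun := fun x => (x : R) • v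
          map_add' := fun x y => add_smul (x : R) (y : R) v
          map_smul' := fun r x => mul_smul r (x : R) v }
      let θ : M →ₗ[R] M := ψ ∘ₗ (e.symm : M →ₗ[R] L)
      obtain ⟨c, hc⟩ := hEnd θ
      refine ⟨c, ?_⟩
      have he : e ⟨r₀, hr₀L⟩ = r₀ • m₀ := rfl
      have hsymm : e.symm (r₀ • m₀) = ⟨r₀, hr₀L⟩ := by
        rw [← he, LinearEquiv.symm_apply_apply]
      have : θ (r₀ • m₀) = r₀ • v := by
        simp only [θ, LinearMap.coe_comp, Function.comp_apply, LinearEquiv.coe_coe, hsymm]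
        rfl
      rw [← this, hc]
    obtain ⟨c, hc⟩ := hrv
    have : r₀ • v ∈ Submodule.span k (↑({r₀ • m₀} : Finset M) : Set M) := by
      rw [Finset.coe_singleton, hc]
      exact Submodule.smul_mem _ c (Submodule.mem_span_singleton_self _)
    exact this

section LemmaB

variable (k) in
/-- two-point density lemma -/
theorem two_point_density
    (hEnd : ∀ φ : M →ₗ[R] M, ∃ c : k, ∀ m, φ m = c • m)
    {u : M} (hu : u ≠ 0) {v : M} (h : ∀ s : R, s • u = 0 → s • v = 0) :
    ∃ c : k, v = c • u := by
  classical
  choose g hg using fun m => exists_smul_eq_of_simple' (R := R) hu m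
  have key : ∀ (a : R) (m : M), a • u = m → a • v = g m • v := by
    intro a m ha
    have : (a - g m) • u = 0 := by rw [sub_smul, ha, hg m, sub_self]
    have := h _ this
    rwa [sub_smul, sub_eq_zero] at this
  let θ : M →ₗ[R] M :=
    { toFun := fun m => g m • v
      map_add' := fun m m' => by
        show g (m + m') • v = g m • v + g m' • v
        rw [← key (g m + g m') (m + m') (by rw [add_smul, hg, hg]), add_smul]
      map_smul' := fun r m => by
        show g (r • m) • v = r • (g m • v)
        rw [← key (r * g m) (r • m) (by rw [mul_smul, hg]), mul_smul] }
  obtain ⟨c, hc⟩ := hEnd θ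
  have hθu : θ u = v := by
    have : θ u = g u • v := rfl
    rw [this, ← key 1 u (one_smul R u), one_smul]
  exact ⟨c, by rw [← hθu, hc u]⟩

/-- Lemma B : a nonzero finite-rank element gives a minimal left ideal. -/
theorem atom_of_finite_rank
    (hEnd : ∀ φ : M →ₗ[R] M, ∃ c : k, ∀ m, φ m = c • m)
    (hex : ∃ r : R, (∃ m : M, r • m ≠ 0) ∧
      (Submodule.span k (Set.range fun m : M => r • m)).FG) :
    ∃ L : Submodule R R, IsAtom L := by
  classical
  set W : R → Submodule k M := fun r => Submodule.span k (Set.range fun m : M => r • m)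
    with hW
  -- choose an element of minimal positive rank
  have hT : ∃ n : ℕ, ∃ r : R, ((∃ m : M, r • m ≠ 0) ∧ (W r).FG) ∧
      Module.finrank k (W r) = n := by
    obtain ⟨r, h1, h2⟩ := hex
    exact ⟨Module.finrank k (W r), r, ⟨h1, h2⟩, rfl⟩
  obtain ⟨r, ⟨⟨⟨m₀, hm₀⟩, hFG⟩, hrank⟩⟩ := Nat.find_spec hT
  have hmin : ∀ s : R, (∃ m : M, s • m ≠ 0) → (W s).FG →
      Module.finrank k (W r) ≤ Module.finrank k (W s) := by
    intro s h1 h2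
    rw [hrank]
    exact Nat.find_min' hT ⟨s, ⟨h1, h2⟩, rfl⟩
  haveI : Module.Finite k (W r) := Module.Finite.iff_fg.2 hFG
  set u : M := r • m₀ with hu
  have huW : u ∈ W r := Submodule.subset_span ⟨m₀, rfl⟩
  -- rank one
  have hrank1 : ∀ m : M, ∃ c : k, r • m = c • u := by
    intro m
    refine two_point_density k hEnd hm₀ fun s hs => ?_
    by_contra hsv
    -- the element s * r has strictly smaller positive rank
    let f : M →ₗ[k] M :=
      { toFun := fun x => s • x
        map_add' := fun x y => smul_add s x y
        map_smul' := fun c x => (smul_comm s c x) }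
    have hWmap : W (s * r) = Submodule.map f (W r) := by
      show Submodule.span k (Set.range fun m : M => (s * r) • m)
          = Submodule.map f (Submodule.span k (Set.range fun m : M => r • m))
      rw [Submodule.map_span, ← Set.range_comp]
      exact congrArg (Submodule.span k) (congrArg Set.range (funext fun x => mul_smul s r x))
    have hsrne : ∃ m' : M, (s * r) • m' ≠ 0 := ⟨m, by rwa [mul_smul]⟩
    have hsrFG : (W (s * r)).FG := hWmap ▸ hFG.map f
    -- compare ranks
    let g := f.comp (W r).subtype
    have hgrange : LinearMap.range g = W (s * r) := by
      rw [hWmap]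
      rw [LinearMap.range_comp, Submodule.range_subtype]
    have hker : (⟨u, huW⟩ : W r) ∈ LinearMap.ker g := by
      simp only [LinearMap.mem_ker]
      show f u = 0
      exact hs
    have hkerne : (⟨u, huW⟩ : W r) ≠ 0 := by
      intro h
      apply hm₀
      simpa [hu] using congrArg (Submodule.subtype (W r)) h
    have hkerpos : 0 < Module.finrank k (LinearMap.ker g) := by
      rw [Module.finrank_pos_iff]
      exact nontrivial_of_ne (⟨⟨u, huW⟩, hker⟩ : LinearMap.ker g) 0
        (fun h => hkerne (congrArg Subtype.val h))
    have hlt : Module.finrank k (W (s * r)) < Module.finrank k (W r) := by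
      have := LinearMap.finrank_range_add_finrank_ker g
      rw [hgrange] at this
      omega
    exact absurd (hmin (s * r) hsrne hsrFG) (not_le.2 hlt)
  -- the left ideal generated by r is an atom
  have hrne : r ≠ 0 := fun h => hm₀ (by rw [hu, h, zero_smul])
  refine ⟨Submodule.span R {r}, ?_, ?_⟩
  · rw [Ne, Submodule.span_singleton_eq_bot]
    exact hrne
  · intro b hb
    by_contra hbne
    obtain ⟨s, hsb, hsne⟩ := Submodule.exists_mem_ne_zero_of_ne_bot hbne
    obtain ⟨t, hts⟩ := Submodule.mem_span_singleton.1 (hb.le hsb)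
    rw [smul_eq_mul] at hts
    obtain ⟨m₁, hm₁⟩ := exists_smul_ne_zero (M := M) hsne
    have htr : t • (r • m₁) ≠ 0 := by rw [← mul_smul, hts]; exact hm₁
    obtain ⟨c₁, hc₁⟩ := hrank1 m₁
    have htu : t • u ≠ 0 := by
      intro h
      apply htr
      rw [hc₁, smul_comm, h, smul_zero]
    obtain ⟨x, hx⟩ := exists_smul_eq_of_simple' (R := R) htu u
    have hxtr : (x * t) * r = r := by
      apply eq_of_smul_eq_smul (α := M)
      intro m
      obtain ⟨c, hc⟩ := hrank1 m
      calc ((x * t) * r) • m = (x * t) • (r • m) := by rw [mul_smul]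
        _ = (x * t) • (c • u) := by rw [hc]
        _ = c • ((x * t) • u) := by rw [smul_comm]
        _ = c • (x • (t • u)) := by rw [mul_smul]
        _ = c • u := by rw [hx]
        _ = r • m := hc.symm
    have hrb : r ∈ b := by
      have : r = x • s := by rw [smul_eq_mul, ← hts, ← mul_assoc, hxtr]
      rw [this]
      exact b.smul_mem x hsb
    have : Submodule.span R {r} ≤ b := Submodule.span_le.2 (Set.singleton_subset_iff.2 hrb)
    exact absurd this hb.not_ge

end LemmaB

end BC


/-- Transfer of submodule lattices along a surjective ring hom with compatible actions. -/
def submoduleOrderIso {R S M : Type*} [Ring R] [Ring S] [AddCommGroup M]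
    [Module R M] [Module S M] (f : R →+* S) (hf : Function.Surjective f)
    (h : ∀ (a : R) (m : M), f a • m = a • m) : Submodule R M ≃o Submodule S M where
  toFun p :=
    { carrier := p
      add_mem' := fun ha hb => p.add_mem ha hb
      zero_mem' := p.zero_mem
      smul_mem' := fun s m hm => by
        obtain ⟨a, rfl⟩ := hf s
        rw [h]
        exact p.smul_mem a hm }
  invFun q :=
    { carrier := q
      add_mem' := fun ha hb => q.add_mem ha hb
      zero_mem' := q.zero_mem
      smul_mem' := fun a m hm => by
        rw [← h]
        exact q.smul_mem (f a) hm }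
  left_inv p := SetLike.ext fun x => Iff.rfl
  right_inv q := SetLike.ext fun x => Iff.rfl
  map_rel_iff' := Iff.rfl

theorem isSimpleModule_iff_of_surjective {R S M : Type*} [Ring R] [Ring S] [AddCommGroup M]
    [Module R M] [Module S M] (f : R →+* S) (hf : Function.Surjective f)
    (h : ∀ (a : R) (m : M), f a • m = a • m) :
    IsSimpleModule R M ↔ IsSimpleModule S M :=
  by rw [isSimpleModule_iff, isSimpleModule_iff]; exact (submoduleOrderIso f hf h).isSimpleOrder_iff

/-- The annihilator of a module as a two-sided ideal. -/
def annTwoSidedIdeal (A : Type*) [Ring A] (V : Type*) [AddCommGroup V] [Module A V] :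
    TwoSidedIdeal A :=
  TwoSidedIdeal.mk' {a : A | ∀ v : V, a • v = 0}
    (fun v => zero_smul A v)
    (fun {x y} hx hy v => by rw [add_smul, hx, hy, add_zero])
    (fun {x} hx v => by rw [neg_smul, hx, neg_zero])
    (fun {x y} hy v => by rw [mul_smul, hy, smul_zero])
    (fun {x y} hx v => by rw [mul_smul, hx])

theorem mem_annTwoSidedIdeal {A : Type*} [Ring A] {V : Type*} [AddCommGroup V] [Module A V]
    {a : A} : a ∈ annTwoSidedIdeal A V ↔ ∀ v : V, a • v = 0 :=
  TwoSidedIdeal.mem_mk' _ _ _ _ _ _ a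

theorem mk'_surjective {A : Type*} [Ring A] (c : RingCon A) :
    Function.Surjective c.mk' := fun x => Quotient.inductionOn' x fun a => ⟨a, rfl⟩

/-- The quotient by the annihilator acts on the module. -/
def annQuotModule (A : Type*) [Ring A] (V : Type*) [AddCommGroup V] [Module A V] :
    Module (annTwoSidedIdeal A V).ringCon.Quotient V where
  smul x v := Quotient.liftOn' x (fun a => a • v) (fun a b hab => by
    have h : a - b ∈ annTwoSidedIdeal A V :=
      (TwoSidedIdeal.rel_iff _ _ _).1 (Quotient.eq''.1 (Quotient.sound' hab))
    have := mem_annTwoSidedIdeal.1 h v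
    rw [sub_smul, sub_eq_zero] at this
    exact this)
  one_smul v := one_smul A v
  mul_smul x y v := Quotient.inductionOn₂' x y fun a b => mul_smul a b v
  smul_zero x := Quotient.inductionOn' x fun a => smul_zero a
  smul_add x v w := Quotient.inductionOn' x fun a => smul_add a v w
  add_smul x y v := Quotient.inductionOn₂' x y fun a b => add_smul a b v
  zero_smul v := zero_smul A v

/-- Let `k` be an algebraically closed field and `A` a `k`-algebra whose dimension as a
`k`-vector space is strictly less than the cardinality of `k`.  Then `A` is GCR if and only
if for every simple left `A`-module `V` there exists `a ∈ A` whose action on `V` is a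
nonzero `k`-linear operator of finite rank, i.e., `a • V ≠ 0` and the `k`-subspace `a • V`
of `V` is finite-dimensional over `k`. -/
theorem isGCRRing_iff_exists_finite_rank_over_field (k : Type u) (A : Type v) [Field k]
    [IsAlgClosed k] [Ring A] [Algebra k A]
    (hdim : Cardinal.lift.{u} (Module.rank k A) < Cardinal.lift.{v} (Cardinal.mk k)) :
    IsGCRRing A ↔
      ∀ (V : Type v) [AddCommGroup V] [Module k V] [Module A V] [IsScalarTower k A V],
        IsSimpleModule A V →
          ∃ a : A, (∃ v : V, a • v ≠ 0) ∧
            (Submodule.span k (Set.range fun v : V => a • v)).FG := by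
  constructor
  · -- GCR implies the finite-rank condition
    intro hGCR V _ _ _ _ hsimp
    haveI : IsSimpleModule A V := hsimp
    set P := annTwoSidedIdeal A V with hP
    letI : Module P.ringCon.Quotient V := annQuotModule A V
    let π : A →+* P.ringCon.Quotient := P.ringCon.mk'
    have hπ : Function.Surjective π := mk'_surjective _
    have hcompat : ∀ (a : A) (v : V), π a • v = a • v := fun a v => rfl
    haveI hsimpR : IsSimpleModule P.ringCon.Quotient V :=
      (isSimpleModule_iff_of_surjective π hπ hcompat).1 hsimp
    haveI hfaith : FaithfulSMul P.ringCon.Quotient V := by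
      refine ⟨fun {x y} h => ?_⟩
      refine Quotient.inductionOn₂' x y (fun a b h => ?_) h
      apply Quotient.sound'
      have hmem : a - b ∈ P := mem_annTwoSidedIdeal.2 fun v => by
        rw [sub_smul, sub_eq_zero]
        exact h v
      exact (TwoSidedIdeal.rel_iff _ _ _).2 hmem
    have hprim : IsPrimitiveRing P.ringCon.Quotient :=
      ⟨V, inferInstance, inferInstance, hsimpR, hfaith⟩
    obtain ⟨L, hL⟩ := hGCR P hprim
    haveI : SMulCommClass A k V := aux_smulCommClass
    haveI : SMulCommClass P.ringCon.Quotient k V :=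
      ⟨fun x c v => Quotient.inductionOn' x fun a => smul_comm a c v⟩
    have hEnd : ∀ φ : V →ₗ[P.ringCon.Quotient] V, ∃ c : k, ∀ v, φ v = c • v := by
      intro φ
      exact endo_scalar hdim V
        { toFun := φ
          map_add' := φ.map_add
          map_smul' := fun a v => φ.map_smul (π a) v }
    obtain ⟨r, ⟨v1, hv1⟩, hFG⟩ := finite_rank_of_atom hEnd hL
    obtain ⟨a, rfl⟩ := hπ r
    exact ⟨a, ⟨v1, hv1⟩, hFG⟩
  · -- the finite-rank condition implies GCR
    intro hcond P hprim
    obtain ⟨M, hAdd, hMod, hsimp, hfaith⟩ := hprim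
    let π : A →+* P.ringCon.Quotient := P.ringCon.mk'
    have hπ : Function.Surjective π := mk'_surjective _
    letI : Module A M := Module.compHom M π
    have hcompat : ∀ (a : A) (m : M), π a • m = a • m := fun a m => rfl
    letI : Module k M := Module.compHom M (π.comp (algebraMap k A))
    haveI : IsScalarTower k A M := by
      refine ⟨fun c a m => ?_⟩
      show π (c • a) • m = π (algebraMap k A c) • (π a • m)
      rw [Algebra.smul_def, map_mul, mul_smul]
    haveI : IsSimpleModule A M := (isSimpleModule_iff_of_surjective π hπ hcompat).2 hsimp
    obtain ⟨a, ⟨m1, hm1⟩, hFG⟩ := hcond M this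
    haveI : SMulCommClass P.ringCon.Quotient k M := by
      refine ⟨fun x c m => ?_⟩
      refine Quotient.inductionOn' x fun b => ?_
      show π b • (π (algebraMap k A c) • m) = π (algebraMap k A c) • (π b • m)
      rw [← mul_smul, ← mul_smul, ← map_mul, ← map_mul, Algebra.commutes]
    have hEnd : ∀ φ : M →ₗ[P.ringCon.Quotient] M, ∃ c : k, ∀ m, φ m = c • m := by
      intro φ
      exact endo_scalar hdim M
        { toFun := φ
          map_add' := φ.map_add
          map_smul' := fun b m => φ.map_smul (π b) m }
    exact atom_of_finite_rank hEnd ⟨π a, ⟨m1, hm1⟩, hFG⟩
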